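/- Let Γ be a Deza graph with parameters (n,k,b,a) with b > a. Then for every vertex x, the number of vertices having exactly b common neighbours with x equals β = (k(k-1) - a(n-1))/(b-a), and the number of vertices having exactly a common neighbours with x equals α = (b(n-1) - k(k-1))/(b-a); in particular these quantities do not depend on the choice of x. -/

import Mathlib

open SimpleGraph

/-- Number of common neighbours of `u` and `v` in `G`. -/
noncomputable def cc {V : Type*} (G : SimpleGraph V) (u v : V) : ℕ :=
  Nat.card (G.commonNeighbors u v)

/-- `G` is regular of valency `k`. -/
def IsRegularNat {V : Type*} (G : SimpleGraph V) (k : ℕ) : Prop :=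
  ∀ v : V, Nat.card (G.neighborSet v) = k

/-- `G` is a Deza graph with parameters `(n, k, b, a)`. -/
def IsDeza {V : Type*} (G : SimpleGraph V) (n k b a : ℕ) : Prop :=
  a ≤ b ∧ b ≤ k ∧ k < n ∧ Nat.card V = n ∧ IsRegularNat G k ∧
  (∀ u v : V, u ≠ v → cc G u v = a ∨ cc G u v = b) ∧
  (∃ u v : V, u ≠ v ∧ cc G u v = a) ∧
  (∃ u v : V, u ≠ v ∧ cc G u v = b)

/-- In a Deza graph with parameters `(n,k,b,a)`, `b > a`, for every
vertex `x` the numbers of `b`-vertices and `a`-vertices for `x` are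
`β = (k(k-1) - a(n-1))/(b-a)` and `α = (b(n-1) - k(k-1))/(b-a)` respectively. -/
theorem deza_alpha_beta {V : Type*} [Fintype V] (G : SimpleGraph V) (n k b a : ℕ)
    (h : IsDeza G n k b a) (hab : a < b) (x : V) :
    (Nat.card {y : V | y ≠ x ∧ cc G x y = b} : ℚ) =
      ((k : ℚ) * ((k : ℚ) - 1) - (a : ℚ) * ((n : ℚ) - 1)) / ((b : ℚ) - (a : ℚ)) ∧
    (Nat.card {y : V | y ≠ x ∧ cc G x y = a} : ℚ) =
      ((b : ℚ) * ((n : ℚ) - 1) - (k : ℚ) * ((k : ℚ) - 1)) / ((b : ℚ) - (a : ℚ)) := by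
  classical
  obtain ⟨hab', hbk, hkn, hn, hreg, hdez, -, -⟩ := h
  have hccF : ∀ u v : V, cc G u v = (G.neighborFinset u ∩ G.neighborFinset v).card := by
    intro u v
    rw [cc, Nat.card_eq_fintype_card, ← Set.toFinset_card]
    congr 1
    ext z
    rw [Set.mem_toFinset]
    simp [commonNeighbors, mem_neighborFinset]
  have hregF : ∀ v : V, (G.neighborFinset v).card = k := by
    intro v
    have := hreg v
    rwa [Nat.card_eq_fintype_card, ← Set.toFinset_card, ← neighborFinset_def] at this
  have step : ∀ y : V, cc G x y =
      ∑ z ∈ G.neighborFinset x, if G.Adj z y then 1 else 0 := by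
    intro y
    rw [hccF x y, ← Finset.filter_mem_eq_inter, Finset.card_filter]
    refine Finset.sum_congr rfl fun z hz => ?_
    simp [mem_neighborFinset, adj_comm]
  have hsum : ∑ y ∈ Finset.univ.erase x, cc G x y = k * (k - 1) := by
    calc ∑ y ∈ Finset.univ.erase x, cc G x y
        = ∑ y ∈ Finset.univ.erase x, ∑ z ∈ G.neighborFinset x,
            if G.Adj z y then 1 else 0 := Finset.sum_congr rfl fun y _ => step y
      _ = ∑ z ∈ G.neighborFinset x, ∑ y ∈ Finset.univ.erase x,
            if G.Adj z y then 1 else 0 := Finset.sum_comm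
      _ = ∑ z ∈ G.neighborFinset x, (k - 1) := by
          refine Finset.sum_congr rfl fun z hz => ?_
          have hzx : G.Adj x z := (mem_neighborFinset _ _ _).1 hz
          rw [← Finset.card_filter]
          have : (Finset.univ.erase x).filter (fun y => G.Adj z y)
              = (G.neighborFinset z).erase x := by
            ext y
            simp [mem_neighborFinset, and_comm]
          rw [this, Finset.card_erase_of_mem, hregF]
          rw [mem_neighborFinset]
          exact hzx.symm
      _ = k * (k - 1) := by rw [Finset.sum_const, hregF, smul_eq_mul]
  set A : Finset V := (Finset.univ.erase x).filter (fun y => cc G x y = a) with hA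
  set B : Finset V := (Finset.univ.erase x).filter (fun y => cc G x y = b) with hB
  have hdisj : Disjoint A B := by
    rw [hA, hB, Finset.disjoint_filter]
    intro y _ h1 h2
    omega
  have hunion : A ∪ B = Finset.univ.erase x := by
    ext y
    simp only [hA, hB, Finset.mem_union, Finset.mem_filter, Finset.mem_erase,
      Finset.mem_univ, and_true]
    constructor
    · rintro (⟨h1, _⟩ | ⟨h1, _⟩) <;> exact h1
    · intro hy
      rcases hdez x y (fun hxy => hy hxy.symm) with h' | h'
      · exact Or.inl ⟨hy, h'⟩
      · exact Or.inr ⟨hy, h'⟩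
  have hcardsum : A.card + B.card = n - 1 := by
    rw [← Finset.card_union_of_disjoint hdisj, hunion, Finset.card_erase_of_mem
      (Finset.mem_univ x), Finset.card_univ, ← hn, Nat.card_eq_fintype_card]
  have hsum2 : a * A.card + b * B.card = k * (k - 1) := by
    rw [← hsum, ← hunion, Finset.sum_union hdisj]
    congr 1
    · rw [Finset.sum_congr rfl (fun y hy => (Finset.mem_filter.1 hy).2),
        Finset.sum_const, smul_eq_mul, mul_comm]
    · rw [Finset.sum_congr rfl (fun y hy => (Finset.mem_filter.1 hy).2),
        Finset.sum_const, smul_eq_mul, mul_comm]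
  -- cast everything to ℚ
  have hk1 : 1 ≤ k := le_trans (Nat.one_le_iff_ne_zero.2 (by omega)) hbk
  have hn1 : 1 ≤ n := by omega
  have hq1 : (A.card : ℚ) + (B.card : ℚ) = (n : ℚ) - 1 := by
    have := congrArg (Nat.cast : ℕ → ℚ) hcardsum
    push_cast [Nat.cast_sub hn1] at this
    linarith
  have hq2 : (a : ℚ) * A.card + (b : ℚ) * B.card = (k : ℚ) * ((k : ℚ) - 1) := by
    have := congrArg (Nat.cast : ℕ → ℚ) hsum2
    push_cast [Nat.cast_sub hk1] at this
    linarith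
  have hba : (b : ℚ) - (a : ℚ) ≠ 0 := by
    have : (a : ℚ) < (b : ℚ) := by exact_mod_cast hab
    linarith
  have hcardA : (Nat.card {y : V | y ≠ x ∧ cc G x y = a} : ℚ) = (A.card : ℚ) := by
    congr 1
    rw [Nat.card_eq_fintype_card, ← Set.toFinset_card]
    congr 1
    ext y
    simp [hA, Finset.mem_filter, and_comm]
  have hcardB : (Nat.card {y : V | y ≠ x ∧ cc G x y = b} : ℚ) = (B.card : ℚ) := by
    congr 1
    rw [Nat.card_eq_fintype_card, ← Set.toFinset_card]
    congr 1
    ext y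
    simp [hB, Finset.mem_filter, and_comm]
  constructor
  · rw [hcardB, eq_div_iff hba]
    linear_combination hq2 - (a : ℚ) * hq1
  · rw [hcardA, eq_div_iff hba]
    linear_combination (b : ℚ) * hq1 - hq2
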